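/- For integers n₁, n₂ ≥ 5, and integers i₁, i₂, k' with i₁ > 1, 4 < i₂ < n₂, i₂ - i₁ ≥ 2, 3 ≤ k' ≤ n₂ - 2, and k' ≠ n₁, n₂, the lattice L₂(n₁,n₂)[k', i₁, i₂] contains a sublattice isomorphic to the pentagon lattice N₅; in particular, it is not modular. -/

import Mathlib

/-- The underlying set of `L₂(n₁,n₂)[k',i₁,i₂]`: bottom `s`, top `t`, and two chains
(`a i` stands for `a_{i+1}`, `b j` for `b_{j+1}`). -/
inductive PElem (n1 n2 : ℕ) : Type where
  | s : PElem n1 n2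
  | a : Fin n1 → PElem n1 n2
  | b : Fin n2 → PElem n1 n2
  | t : PElem n1 n2
deriving DecidableEq

namespace PElem

variable {n1 n2 : ℕ}

/-- 1-based index. -/
def idx {k : ℕ} (i : Fin k) : ℕ := i.val + 1

/-- `a_j` (1-based), with `a_0 = s` and `a_j = t` for `j > n1`. -/
def aP (n1 n2 j : ℕ) : PElem n1 n2 :=
  if _h0 : j = 0 then .s else if h : j ≤ n1 then .a ⟨j - 1, by omega⟩ else .t

/-- `b_j` (1-based), with `b_0 = s` and `b_j = t` for `j > n2`. -/
def bP (n1 n2 j : ℕ) : PElem n1 n2 :=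
  if _h0 : j = 0 then .s else if h : j ≤ n2 then .b ⟨j - 1, by omega⟩ else .t

/-- The order of `L₂(n₁,n₂)[k',i₁,i₂]`: the order of `L₂(n₁,n₂)` together with the
added relations `a_{i₁} < b_{k'}` and `b_{k'} < a_{i₂}`, and its order-theoretic
closure. -/
def ple (i1 i2 k' : ℕ) : PElem n1 n2 → PElem n1 n2 → Prop
  | .s, _ => True
  | _, .t => True
  | .t, _ => False
  | _, .s => False
  | .a i, .a j => i ≤ j
  | .b i, .b j => i ≤ j
  | .a i, .b j => idx i ≤ i1 ∧ k' ≤ idx j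
  | .b j, .a i => idx j ≤ k' ∧ i2 ≤ idx i

/-- The join of `L₂(n₁,n₂)[k',i₁,i₂]`. -/
def psup (i1 i2 k' : ℕ) : PElem n1 n2 → PElem n1 n2 → PElem n1 n2
  | .s, x => x
  | x, .s => x
  | .t, _ => .t
  | _, .t => .t
  | .a i, .a j => .a (max i j)
  | .b i, .b j => .b (max i j)
  | .a i, .b j =>
      if idx i ≤ i1 ∧ k' ≤ idx j then .b j
      else if idx j ≤ k' ∧ i2 ≤ idx i then .a i
      else if idx i ≤ i1 ∧ idx j < k' then bP n1 n2 k'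
      else if idx i < i2 ∧ idx j ≤ k' then aP n1 n2 i2
      else .t
  | .b j, .a i =>
      if idx i ≤ i1 ∧ k' ≤ idx j then .b j
      else if idx j ≤ k' ∧ i2 ≤ idx i then .a i
      else if idx i ≤ i1 ∧ idx j < k' then bP n1 n2 k'
      else if idx i < i2 ∧ idx j ≤ k' then aP n1 n2 i2
      else .t

/-- The meet of `L₂(n₁,n₂)[k',i₁,i₂]`. -/
def pinf (i1 i2 k' : ℕ) : PElem n1 n2 → PElem n1 n2 → PElem n1 n2
  | .s, _ => .s
  | _, .s => .s
  | .t, x => x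
  | x, .t => x
  | .a i, .a j => .a (min i j)
  | .b i, .b j => .b (min i j)
  | .a i, .b j =>
      if idx i ≤ i1 ∧ k' ≤ idx j then .a i
      else if idx j ≤ k' ∧ i2 ≤ idx i then .b j
      else if i2 ≤ idx i ∧ k' < idx j then bP n1 n2 k'
      else if i1 < idx i ∧ k' ≤ idx j then aP n1 n2 i1
      else .s
  | .b j, .a i =>
      if idx i ≤ i1 ∧ k' ≤ idx j then .a i
      else if idx j ≤ k' ∧ i2 ≤ idx i then .b j
      else if i2 ≤ idx i ∧ k' < idx j then bP n1 n2 k'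
      else if i1 < idx i ∧ k' ≤ idx j then aP n1 n2 i1
      else .s

theorem idx_eq' {k : ℕ} (i : Fin k) : idx i = i.val + 1 := by simp [idx]

end PElem

set_option maxHeartbeats 2000000 in
open PElem in
/-- under the stated hypotheses, the lattice `L₂(n₁,n₂)[k',i₁,i₂]` contains
a sublattice (a 5-element subset closed under join and meet) isomorphic to the pentagon
`N₅`; in particular it is not modular. -/
theorem L2mod_pentagon_not_modular (n1 n2 i1 i2 k' : ℕ)
    (hn1 : 5 ≤ n1) (hn2 : 5 ≤ n2) (hi1 : 1 < i1) (hi2l : 4 < i2) (hi2r : i2 < n2)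
    (hgap : i1 + 2 ≤ i2) (hk3 : 3 ≤ k') (hkn : k' ≤ n2 - 2) (hk1 : k' ≠ n1)
    (hk2 : k' ≠ n2) :
    (∃ v0 v1 v2 v3 v4 : PElem n1 n2,
      [v0, v1, v2, v3, v4].Pairwise (· ≠ ·) ∧
      ple i1 i2 k' v0 v1 ∧ ple i1 i2 k' v1 v4 ∧
      ple i1 i2 k' v0 v2 ∧ ple i1 i2 k' v2 v3 ∧ ple i1 i2 k' v3 v4 ∧
      psup i1 i2 k' v1 v2 = v4 ∧ pinf i1 i2 k' v1 v2 = v0 ∧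
      psup i1 i2 k' v1 v3 = v4 ∧ pinf i1 i2 k' v1 v3 = v0 ∧
      (∀ x ∈ ({v0, v1, v2, v3, v4} : Set (PElem n1 n2)),
        ∀ y ∈ ({v0, v1, v2, v3, v4} : Set (PElem n1 n2)),
          psup i1 i2 k' x y ∈ ({v0, v1, v2, v3, v4} : Set (PElem n1 n2)) ∧
          pinf i1 i2 k' x y ∈ ({v0, v1, v2, v3, v4} : Set (PElem n1 n2)))) ∧
    ¬ ∀ x y z : PElem n1 n2,
        ple i1 i2 k' x z →
          psup i1 i2 k' x (pinf i1 i2 k' y z) = pinf i1 i2 k' (psup i1 i2 k' x y) z := by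
  
  have hb0 : (0:ℕ) < n2 := by omega
  have hb1 : k' - 2 < n2 := by omega
  have hb2 : k' - 1 < n2 := by omega
  have ha0 : (0:ℕ) < n1 := by omega
  refine ⟨⟨.s, .a ⟨0, ha0⟩, .b ⟨0, hb0⟩, .b ⟨k' - 2, hb1⟩, .b ⟨k' - 1, hb2⟩, ?_, ?_, ?_, ?_, ?_, ?_, ?_, ?_, ?_, ?_, ?_⟩, ?_⟩
  · simp [Fin.ext_iff]; omega
  · trivial
  · simp [ple, idx]; omega
  · trivial
  · simp [ple, Fin.le_def]
  · simp [ple, Fin.le_def]; omega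
  · simp only [psup, idx_eq']
    rw [if_neg (by omega), if_neg (by omega), if_pos (by omega)]
    rw [bP]; rw [dif_neg (by omega), dif_pos (by omega)]
  · simp only [pinf, idx_eq']
    rw [if_neg (by omega), if_neg (by omega), if_neg (by omega), if_neg (by omega)]
  · simp only [psup, idx_eq']
    rw [if_neg (by omega), if_neg (by omega), if_pos (by omega)]
    rw [bP]; rw [dif_neg (by omega), dif_pos (by omega)]
  · simp only [pinf, idx_eq']
    rw [if_neg (by omega), if_neg (by omega), if_neg (by omega), if_neg (by omega)]
  · intro x hx y hy
    simp only [Set.mem_insert_iff, Set.mem_singleton_iff] at hx hy ⊢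
    rcases hx with rfl | rfl | rfl | rfl | rfl <;>
      rcases hy with rfl | rfl | rfl | rfl | rfl <;>
      constructor <;>
      (simp only [psup, pinf, idx_eq', bP, aP, max_def, min_def, Fin.mk_le_mk];
       try split_ifs) <;>
      first
        | omega
        | simp [Fin.ext_iff]
        | (simp [Fin.ext_iff]; omega)
  · intro hmod
    have h := hmod (.b ⟨0, hb0⟩) (.a ⟨0, ha0⟩) (.b ⟨k' - 2, hb1⟩)
      (by simp [ple, Fin.le_def])
    rw [show pinf i1 i2 k' (.a ⟨0, ha0⟩) (.b ⟨k' - 2, hb1⟩) = .s by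
        simp only [pinf, idx_eq']
        rw [if_neg (by omega), if_neg (by omega), if_neg (by omega), if_neg (by omega)],
      show psup i1 i2 k' (.b ⟨0, hb0⟩) (.a ⟨0, ha0⟩) = .b ⟨k' - 1, hb2⟩ by
        simp only [psup, idx_eq']
        rw [if_neg (by omega), if_neg (by omega), if_pos (by omega)]
        rw [bP]; rw [dif_neg (by omega), dif_pos (by omega)]] at h
    simp only [psup, pinf, min_def, Fin.le_def] at h
    split_ifs at h <;> simp_all [Fin.ext_iff] <;> omega
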